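/- For every separable complex Banach space X there exists a ℂ-linear isometry T : X → ℓ∞ such that the only element of the range of T lying in c0 is 0; that is, every separable Banach space has an isometric linear copy inside (ℓ∞ \ c0) ∪ {0}. -/

import Mathlib

open Filter Topology ENNReal

noncomputable section

/-- `ℓ∞`, the bounded complex sequences. -/
abbrev linf : Type := lp (fun _ : ℕ => ℂ) ∞

/-- `c₀`, the elements of `ℓ∞` tending to zero. -/
def c0 : Set linf := {f | Tendsto (fun n => (f : ∀ _ : ℕ, ℂ) n) atTop (𝓝 0)}

/-- **Theorem 4.1, second part.** Every separable complex Banach space `X` admits a linear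
isometric copy inside `(ℓ∞ \ c₀) ∪ {0}`: there is a `ℂ`-linear isometry `T : X → ℓ∞` whose
range meets `c₀` only at `0`. -/
theorem exists_linear_isometric_copy_of_separable_banach_space_avoiding_c0
    (X : Type*) [NormedAddCommGroup X] [NormedSpace ℂ X] [CompleteSpace X]
    [TopologicalSpace.SeparableSpace X] :
    ∃ T : X →ₗᵢ[ℂ] linf, ∀ y ∈ Set.range T, y ∈ c0 → y = 0 := by
  obtain ⟨u, hu⟩ := TopologicalSpace.exists_dense_seq X
  choose f hf1 hf2 using fun n => exists_dual_vector'' ℂ (u n)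
  set g : ℕ → X →L[ℂ] ℂ := fun n => f (Nat.unpair n).1 with hg
  have hbound : ∀ (x : X) (n : ℕ), ‖g n x‖ ≤ ‖x‖ := by
    intro x n
    calc ‖g n x‖ ≤ ‖g n‖ * ‖x‖ := (g n).le_opNorm x
    _ ≤ 1 * ‖x‖ := mul_le_mul_of_nonneg_right (hf1 _) (norm_nonneg x)
    _ = ‖x‖ := one_mul _
  have hmem : ∀ x : X, Memℓp (fun n => g n x) ∞ := by
    intro x
    apply memℓp_infty
    refine ⟨‖x‖, ?_⟩
    rintro r ⟨n, rfl⟩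
    exact hbound x n
  have hle : ∀ x : X, ‖x‖ ≤ ‖(⟨fun n => g n x, hmem x⟩ : linf)‖ := by
    intro x
    refine le_of_forall_pos_le_add ?_
    intro ε hε
    obtain ⟨m, hm⟩ := hu.exists_dist_lt x (half_pos hε)
    rw [dist_eq_norm] at hm
    have h1 : ‖f m x‖ ≤ ‖(⟨fun n => g n x, hmem x⟩ : linf)‖ := by
      have h := lp.norm_apply_le_norm ENNReal.top_ne_zero
        (⟨fun n => g n x, hmem x⟩ : linf) (Nat.pair m 0)
      have heq : (⟨fun n => g n x, hmem x⟩ : linf) (Nat.pair m 0) = f m x := by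
        show g (Nat.pair m 0) x = f m x
        simp [hg, Nat.unpair_pair]
      rwa [heq] at h
    have h2 : ‖x‖ ≤ ‖f m x‖ + ε := by
      have hdiff : ‖f m (u m) - f m x‖ ≤ ε / 2 := by
        rw [← map_sub]
        calc ‖f m (u m - x)‖ ≤ ‖u m - x‖ := by
              calc ‖f m (u m - x)‖ ≤ ‖f m‖ * ‖u m - x‖ := (f m).le_opNorm _
              _ ≤ 1 * ‖u m - x‖ := mul_le_mul_of_nonneg_right (hf1 _) (norm_nonneg _)
              _ = ‖u m - x‖ := one_mul _
        _ ≤ ε / 2 := by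
              rw [norm_sub_rev]
              exact le_of_lt hm
      have hum : ‖f m (u m)‖ = ‖u m‖ := by
        rw [hf2 m]
        simp
      have hxu : ‖x‖ ≤ ‖u m‖ + ε / 2 := by
        have h3 := norm_sub_norm_le x (u m)
        linarith
      have : ‖f m (u m)‖ ≤ ‖f m x‖ + ε / 2 := by
        calc ‖f m (u m)‖ ≤ ‖f m x‖ + ‖f m (u m) - f m x‖ := by
              have := norm_sub_norm_le (f m (u m)) (f m x)
              linarith
        _ ≤ ‖f m x‖ + ε / 2 := by linarith
      rw [hum] at this
      linarith
    linarith
  set T : X →ₗᵢ[ℂ] linf :=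
    { toFun := fun x => ⟨fun n => g n x, hmem x⟩
      map_add' := fun x y => by
        apply lp.ext
        ext n
        simp [lp.coeFn_add]
        rfl
      map_smul' := fun c x => by
        apply lp.ext
        ext n
        simp [lp.coeFn_smul]
      norm_map' := fun x => by
        refine le_antisymm ?_ (hle x)
        exact lp.norm_le_of_forall_le (norm_nonneg x) (hbound x) } with hT
  refine ⟨T, ?_⟩
  rintro y ⟨x, rfl⟩ hy
  have hcoord : ∀ k : ℕ, f k x = 0 := by
    intro k
    have hmono : Tendsto (fun m : ℕ => Nat.pair k m) atTop atTop :=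
      tendsto_atTop_mono (fun m => Nat.right_le_pair k m) tendsto_id
    have : Tendsto (fun m : ℕ => g (Nat.pair k m) x) atTop (𝓝 0) := by
      have := hy.comp hmono
      exact this
    have hconst : (fun m : ℕ => g (Nat.pair k m) x) = fun _ => f k x := by
      funext m
      simp [hg, Nat.unpair_pair]
    rw [hconst] at this
    exact tendsto_nhds_unique tendsto_const_nhds this
  have : T x = 0 := by
    apply lp.ext
    ext n
    simp only [hT]
    show g n x = (0 : linf) n
    rw [lp.coeFn_zero]
    simp [hg, hcoord]
  exact this
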